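/- Let AP be a finite set of atomic propositions, A ⊆ AP, p ∉ AP, and let L_θ ⊆ (2^AP)^ω be any language. Set I = AP∖A, O = H = A ∪ {p}, and L_ψ = {w ∈ (2^(AP∪{p}))^ω : w|_AP ∈ L_θ or p ∈ w₀}, where w|_AP is the letterwise restriction of w to AP. Then the following are equivalent: (i) there is no w ∈ (2^AP)^ω such that every w' ∈ noise_A(w) belongs to L_θ (i.e., the universally quantified statement ∀A θ is unsatisfiable); (ii) every (I/O)-transducer H-hides L_ψ; (iii) some (I/O)-transducer with a single state H-hides L_ψ. -/

import Mathlib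

open Set

/-- Infinite words over alphabet `A`. -/
abbrev Word (A : Type) := ℕ → A

/-- `noiseW H w`: all words that agree with `w` on the visible signals `Hᶜ`. -/
def noiseW {A : Type} (H : Set A) (w : Word (Set A)) : Set (Word (Set A)) :=
  {w' | ∀ j, w' j ∩ Hᶜ = w j ∩ Hᶜ}

/-- A transducer with input alphabet `Ain` and output alphabet `Aout`. -/
structure Transd (Ain Aout : Type) where
  S : Type
  fintype_S : Fintype S
  s0 : S
  η : S → Ain → S
  τ : S → Aout

def Transd.stateAt {Ain Aout : Type} (T : Transd Ain Aout) (w : Word Ain) : ℕ → T.S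
  | 0 => T.η T.s0 (w 0)
  | n + 1 => T.η (T.stateAt w n) (w (n + 1))

def Transd.out {Ain Aout : Type} (T : Transd Ain Aout) (w : Word Ain) (j : ℕ) : Aout :=
  T.τ (T.stateAt w j)

/-- Here `I = AP ∖ A` and `O = A ∪ {p}`, where the fresh signal `p` is `Sum.inr ()` in
the signal type `AP ⊕ Unit`.  The computation of a transducer, as a word over
`2^(AP ∪ {p})`. -/
def comp7 {AP : Type} (A : Set AP)
    (T : Transd (Set {x : AP // x ∉ A}) (Set ({x : AP // x ∈ A} ⊕ Unit)))
    (wI : Word (Set {x : AP // x ∉ A})) : Word (Set (AP ⊕ Unit)) :=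
  fun j =>
    (fun x : {x : AP // x ∉ A} => (Sum.inl x.val : AP ⊕ Unit)) '' wI j ∪
    (Sum.elim (fun a : {x : AP // x ∈ A} => (Sum.inl a.val : AP ⊕ Unit))
      (fun _ => Sum.inr ())) '' T.out wI j

/-- The hidden signals `H = A ∪ {p}`. -/
def hiddenSet {AP : Type} (A : Set AP) : Set (AP ⊕ Unit) :=
  (Sum.inl '' A) ∪ {Sum.inr ()}

/-- The secret `L_ψ = {w : w|_AP ∈ L_θ or p ∈ w₀}`. -/
def secret7 {AP : Type} (Lθ : Set (Word (Set AP))) : Set (Word (Set (AP ⊕ Unit))) :=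
  {w | (fun j => Sum.inl ⁻¹' w j) ∈ Lθ ∨ Sum.inr () ∈ w 0}

/-- `T` `H`-hides the secret `L_ψ`. -/
def hides7 {AP : Type} (A : Set AP) (Lθ : Set (Word (Set AP)))
    (T : Transd (Set {x : AP // x ∉ A}) (Set ({x : AP // x ∈ A} ⊕ Unit))) : Prop :=
  ∀ wI, ∃ wp ∈ noiseW (hiddenSet A) (comp7 A T wI),
    ∃ wm ∈ noiseW (hiddenSet A) (comp7 A T wI),
      wp ∈ secret7 Lθ ∧ wm ∉ secret7 Lθ


lemma noise_mem {B : Type} {H : Set B} {w w' : Word (Set B)}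
    (h : w' ∈ noiseW H w) {j : ℕ} {z : B} (hz : z ∉ H) : z ∈ w' j ↔ z ∈ w j := by
  constructor <;> intro hm
  · have hx : z ∈ w' j ∩ Hᶜ := ⟨hm, hz⟩
    rw [h j] at hx; exact hx.1
  · have hx : z ∈ w j ∩ Hᶜ := ⟨hm, hz⟩
    rw [← h j] at hx; exact hx.1

lemma inl_mem_hidden {AP : Type} {A : Set AP} {x : AP} :
    (Sum.inl x : AP ⊕ Unit) ∈ hiddenSet A ↔ x ∈ A := by
  simp [hiddenSet]

lemma inr_mem_hidden {AP : Type} {A : Set AP} :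
    (Sum.inr () : AP ⊕ Unit) ∈ hiddenSet A := by
  simp [hiddenSet]

lemma inl_mem_comp7 {AP : Type} {A : Set AP}
    {T : Transd (Set {x : AP // x ∉ A}) (Set ({x : AP // x ∈ A} ⊕ Unit))}
    {wI : Word (Set {x : AP // x ∉ A})} {j : ℕ} {x : AP} (hx : x ∉ A) :
    (Sum.inl x : AP ⊕ Unit) ∈ comp7 A T wI j ↔ (⟨x, hx⟩ : {x : AP // x ∉ A}) ∈ wI j := by
  constructor
  · rintro (⟨y, hy, hyy⟩ | ⟨y, hy, hyy⟩)
    · cases y with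
      | mk v hv =>
        simp only [Sum.inl.injEq] at hyy
        subst hyy; exact hy
    · exfalso
      cases y with
      | inl a =>
        simp only [Sum.elim_inl, Sum.inl.injEq] at hyy
        exact hx (hyy ▸ a.2)
      | inr u => simp at hyy
  · intro h
    exact Or.inl ⟨⟨x, hx⟩, h, rfl⟩

lemma hides7_iff {AP : Type} (A : Set AP) (Lθ : Set (Word (Set AP)))
    (T : Transd (Set {x : AP // x ∉ A}) (Set ({x : AP // x ∈ A} ⊕ Unit))) :
    hides7 A Lθ T ↔ (¬ ∃ w : Word (Set AP), ∀ w' ∈ noiseW A w, w' ∈ Lθ) := by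
  constructor
  · intro hT ⟨w, hw⟩
    set wI : Word (Set {x : AP // x ∉ A}) := fun j => {x | x.val ∈ w j} with hwIdef
    obtain ⟨wp, hwp, wm, hwm, hps, hms⟩ := hT wI
    apply hms
    left
    apply hw
    intro j
    ext x
    simp only [mem_inter_iff, mem_compl_iff, mem_preimage]
    constructor
    · rintro ⟨hx, hxA⟩
      refine ⟨?_, hxA⟩
      have := (noise_mem hwm (j := j) (z := Sum.inl x)
        (by simp [inl_mem_hidden, hxA])).mp hx
      exact (inl_mem_comp7 hxA).mp this
    · rintro ⟨hx, hxA⟩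
      refine ⟨?_, hxA⟩
      exact (noise_mem hwm (j := j) (z := Sum.inl x)
        (by simp [inl_mem_hidden, hxA])).mpr ((inl_mem_comp7 hxA).mpr hx)
  · intro hns wI
    -- wp : add the secret signal p at time 0
    refine ⟨fun j => comp7 A T wI j ∪ {Sum.inr ()}, ?_, ?_⟩
    · intro j
      ext z
      simp only [mem_inter_iff, mem_union, mem_singleton_iff, mem_compl_iff]
      constructor
      · rintro ⟨hz | hz, hzH⟩
        · exact ⟨hz, hzH⟩
        · exact absurd (hz ▸ inr_mem_hidden) hzH
      · rintro ⟨hz, hzH⟩; exact ⟨Or.inl hz, hzH⟩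
    -- wm : from a counterexample word
    have := hns
    obtain ⟨u, hu, hunot⟩ :
        ∃ u ∈ noiseW A (fun j => {x | ∃ h : x ∉ A, (⟨x, h⟩ : {x : AP // x ∉ A}) ∈ wI j}),
          u ∉ Lθ := by
      by_contra hc
      push_neg at hc
      exact hns ⟨_, hc⟩
    refine ⟨fun j => Sum.inl '' u j, ?_, ?_, ?_⟩
    · intro j
      ext z
      simp only [mem_inter_iff, mem_compl_iff]
      constructor
      · rintro ⟨⟨x, hx, rfl⟩, hzH⟩
        have hxA : x ∉ A := fun hxA => hzH (inl_mem_hidden.mpr hxA)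
        have : x ∈ (fun j => {x | ∃ h : x ∉ A, (⟨x, h⟩ : {x : AP // x ∉ A}) ∈ wI j}) j := by
          have hj := hu j
          have : x ∈ u j ∩ Aᶜ := ⟨hx, hxA⟩
          rw [hj] at this
          exact this.1
        obtain ⟨h', hmem⟩ := this
        exact ⟨(inl_mem_comp7 h').mpr hmem, hzH⟩
      · rintro ⟨hz, hzH⟩
        refine ⟨?_, hzH⟩
        cases z with
        | inl x =>
          have hxA : x ∉ A := fun hxA => hzH (inl_mem_hidden.mpr hxA)
          have hmem := (inl_mem_comp7 hxA).mp hz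
          have hxw : x ∈ (fun j => {x | ∃ h : x ∉ A, (⟨x, h⟩ : {x : AP // x ∉ A}) ∈ wI j}) j :=
            ⟨hxA, hmem⟩
          have : x ∈ u j := by
            have hj := hu j
            have hxx : x ∈ (fun j => {x | ∃ h : x ∉ A, (⟨x, h⟩ : {x : AP // x ∉ A}) ∈ wI j}) j ∩ Aᶜ :=
              ⟨hxw, hxA⟩
            rw [← hj] at hxx
            exact hxx.1
          exact ⟨x, this, rfl⟩
        | inr v =>
          exact absurd (by cases v; exact inr_mem_hidden) hzH
    · exact Or.inr (by simp)
    · rintro (hsec | hsec)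
      · apply hunot
        convert hsec using 2 with j
        ext x
        simp
      · simp at hsec

/-- The trivial single-state transducer. -/
def trivT {AP : Type} (A : Set AP) :
    Transd (Set {x : AP // x ∉ A}) (Set ({x : AP // x ∈ A} ⊕ Unit)) :=
  ⟨PUnit, inferInstance, ⟨⟩, fun _ _ => ⟨⟩, fun _ => ∅⟩

/-- unsatisfiability of `∀A θ` is equivalent to all transducers hiding
the secret, and to some single-state transducer hiding it. -/
theorem aqltl_unsat_iff_hiding {AP : Type} [Fintype AP] (A : Set AP)
    (Lθ : Set (Word (Set AP))) :
    ((¬ ∃ w : Word (Set AP), ∀ w' ∈ noiseW A w, w' ∈ Lθ) ↔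
      (∀ T : Transd (Set {x : AP // x ∉ A}) (Set ({x : AP // x ∈ A} ⊕ Unit)),
        hides7 A Lθ T)) ∧
    ((∀ T : Transd (Set {x : AP // x ∉ A}) (Set ({x : AP // x ∈ A} ⊕ Unit)),
        hides7 A Lθ T) ↔
      (∃ T : Transd (Set {x : AP // x ∉ A}) (Set ({x : AP // x ∈ A} ⊕ Unit)),
        @Fintype.card T.S T.fintype_S = 1 ∧ hides7 A Lθ T)) := by
  constructor
  · constructor
    · intro h T
      exact (hides7_iff A Lθ T).mpr h
    · intro h
      exact (hides7_iff A Lθ (trivT A)).mp (h (trivT A))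
  · constructor
    · intro h
      exact ⟨trivT A, by simp [trivT]; exact Fintype.card_eq_one_iff.mpr ⟨⟨⟩, fun _ => rfl⟩, h (trivT A)⟩
    · rintro ⟨T, _, hT⟩ T'
      exact (hides7_iff A Lθ T').mpr ((hides7_iff A Lθ T).mp hT)
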